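/- Let $(z_n)$ be a real sequence with $z_n\to-\infty$ satisfying $z_{n+1} = z_n - g_2 + \frac{g_2^2}{z_n} + O(z_n^{-2})$ for some constant $g_2>0$. Then $z_n = -n g_2 + O(\log n)$ as $n\to\infty$. -/

import Mathlib

set_option maxHeartbeats 1000000 in
theorem stmt_11 (z : ℕ → ℝ) (g₂ : ℝ) (hg₂ : 0 < g₂)
    (hneg : ∀ n, z n < 0)
    (htend : Filter.Tendsto z Filter.atTop Filter.atBot)
    (hrec : ∃ C : ℝ, 0 < C ∧ ∀ n : ℕ, 1 ≤ n →
      |z (n + 1) - (z n - g₂ + g₂ ^ 2 / z n)| ≤ C / (z n) ^ 2) :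
    ∃ C' : ℝ, 0 < C' ∧ ∀ n : ℕ, 2 ≤ n →
      |z n + (n : ℝ) * g₂| ≤ C' * Real.log n := by
  obtain ⟨C, hC, hrec⟩ := hrec
  set M : ℝ := max 1 (2 * C / g₂) with hM
  have hM1 : 1 ≤ M := le_max_left _ _
  have hMC : 2 * C / g₂ ≤ M := le_max_right _ _
  have hM0 : (0:ℝ) < M := by linarith
  obtain ⟨N₀, hN₀⟩ : ∃ N, ∀ n ≥ N, z n ≤ -M := by
    have := htend.eventually (Filter.eventually_le_atBot (-M))
    exact Filter.eventually_atTop.1 this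
  set N₁ := max N₀ 1 with hN₁def
  have hN₁1 : 1 ≤ N₁ := le_max_right _ _
  have hzN₁ : ∀ n ≥ N₁, z n ≤ -M := fun n hn => hN₀ n (le_trans (le_max_left _ _) hn)
  -- each step decreases by at least g₂/2
  have claim1 : ∀ n ≥ N₁, z (n+1) ≤ z n - g₂ / 2 := by
    intro n hn
    have h1 : 1 ≤ n := le_trans hN₁1 hn
    have hb := (abs_le.1 (hrec n h1)).2
    have hz : z n ≤ -M := hzN₁ n hn
    have hzn : z n < 0 := hneg n
    have hsq : M ^ 2 ≤ z n ^ 2 := by nlinarith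
    have h2 : C / z n ^ 2 ≤ C / M ^ 2 := by
      apply div_le_div_of_nonneg_left hC.le (by positivity) hsq
    have h3 : C / M ^ 2 ≤ g₂ / 2 := by
      rw [div_le_iff₀ (by positivity)]
      have h4 : 2 * C ≤ g₂ * M := by
        rw [div_le_iff₀ hg₂] at hMC; linarith
      nlinarith
    have h5 : g₂ ^ 2 / z n ≤ 0 :=
      div_nonpos_of_nonneg_of_nonpos (by positivity) hzn.le
    linarith
  -- linear decay
  have claim2 : ∀ k : ℕ, z (N₁ + k) ≤ -M - k * (g₂ / 2) := by
    intro k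
    induction k with
    | zero => simpa using hzN₁ N₁ le_rfl
    | succ k ih =>
      have h := claim1 (N₁ + k) (Nat.le_add_right _ _)
      have : z (N₁ + (k+1)) = z (N₁ + k + 1) := by ring_nf
      rw [this]
      push_cast
      push_cast at ih
      linarith
  set c : ℝ := g₂ / 4 with hc
  have hc0 : 0 < c := by positivity
  set N₂ : ℕ := 2 * N₁ + 2 with hN₂def
  have hN₂2 : 2 ≤ N₂ := by omega
  have claim3 : ∀ n : ℕ, N₂ ≤ n → c * n ≤ -z n := by
    intro n hn
    obtain ⟨k, rfl⟩ : ∃ k, n = N₁ + k := ⟨n - N₁, by omega⟩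
    have hk : N₁ + 2 ≤ k := by omega
    have hkr : (N₁ : ℝ) ≤ (k : ℝ) := by exact_mod_cast le_trans (by omega) hk
    have h := claim2 k
    push_cast
    push_cast at h
    nlinarith
  set K : ℝ := g₂ ^ 2 / c + C / c ^ 2 with hK
  have hK0 : 0 < K := by positivity
  -- step bound
  have claim4 : ∀ n : ℕ, N₂ ≤ n → |z (n+1) - z n + g₂| ≤ K / n := by
    intro n hn
    have hn1 : 1 ≤ n := le_trans (by omega) hn
    have hnr : (1:ℝ) ≤ (n:ℝ) := by exact_mod_cast hn1
    have hnr0 : (0:ℝ) < (n:ℝ) := by linarith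
    have hz := claim3 n hn
    have hzn : z n < 0 := hneg n
    have hcn : (0:ℝ) < c * n := by positivity
    have hb := hrec n hn1
    have habs : |z (n+1) - z n + g₂| ≤ g₂ ^ 2 / (-z n) + C / z n ^ 2 := by
      have h1 := (abs_le.1 hb).1
      have h2 := (abs_le.1 hb).2
      have h3 : g₂ ^ 2 / z n = -(g₂ ^ 2 / (-z n)) := by
        rw [div_neg]; ring
      rw [h3] at h1 h2
      have hpos : 0 ≤ g₂ ^ 2 / (-z n) := div_nonneg (sq_nonneg _) (by linarith)
      rw [abs_le]
      constructor <;> linarith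
    have h4 : g₂ ^ 2 / (-z n) ≤ g₂ ^ 2 / (c * n) :=
      div_le_div_of_nonneg_left (by positivity) hcn hz
    have h5 : C / z n ^ 2 ≤ C / (c * n) ^ 2 := by
      apply div_le_div_of_nonneg_left hC.le (by positivity)
      nlinarith
    have h6 : g₂ ^ 2 / (c * n) = (g₂ ^ 2 / c) / n := by
      rw [div_div]
    have h7 : C / (c * n) ^ 2 ≤ (C / c ^ 2) / n := by
      rw [div_div]
      apply div_le_div_of_nonneg_left hC.le (by positivity)
      nlinarith
    calc |z (n+1) - z n + g₂| ≤ g₂ ^ 2 / (-z n) + C / z n ^ 2 := habs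
      _ ≤ (g₂ ^ 2 / c) / n + (C / c ^ 2) / n := by rw [← h6]; linarith
      _ = K / n := by rw [hK, add_div]
  set A : ℝ := |z N₂ + (N₂ : ℝ) * g₂| with hA
  have hA0 : 0 ≤ A := abs_nonneg _
  -- log-growth induction
  have claim5 : ∀ k : ℕ, |z (N₂ + k) + ((N₂ + k : ℕ) : ℝ) * g₂|
      ≤ A + 2 * K * Real.log (N₂ + k) := by
    intro k
    induction k with
    | zero =>
      have hN2r : (1:ℝ) ≤ (N₂:ℝ) := by
        have : 1 ≤ N₂ := by omega
        exact_mod_cast this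
      have hlog : 0 ≤ Real.log (N₂:ℝ) := Real.log_nonneg hN2r
      have h2 : 0 ≤ 2 * K * Real.log (N₂:ℝ) := by positivity
      simp only [Nat.add_zero, Nat.cast_zero, add_zero]
      linarith [le_refl A]
    | succ k ih =>
      set n : ℕ := N₂ + k with hn
      have hnr : (1:ℝ) ≤ (n:ℝ) := by
        have : 1 ≤ n := by omega
        exact_mod_cast this
      have hnr0 : (0:ℝ) < (n:ℝ) := by linarith
      have hstep := claim4 n (by omega)
      have hlog : 1 / ((n:ℝ) + 1) ≤ Real.log (n+1) - Real.log n := by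
        have hx : (0:ℝ) < (n:ℝ) / ((n:ℝ)+1) := by positivity
        have h1 := Real.log_le_sub_one_of_pos hx
        have h2 : Real.log ((n:ℝ) / ((n:ℝ)+1)) = Real.log n - Real.log ((n:ℝ)+1) := by
          rw [Real.log_div (by linarith) (by linarith)]
        have h3 : (n:ℝ) / ((n:ℝ)+1) - 1 = -(1 / ((n:ℝ)+1)) := by
          field_simp
          ring
        rw [h2, h3] at h1
        linarith
      have hKn : K / n ≤ 2 * K * (Real.log (n+1) - Real.log n) := by
        have h1 : K / n ≤ 2 * K / ((n:ℝ)+1) := by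
          rw [div_le_div_iff₀ hnr0 (by linarith)]
          have hx := mul_le_mul_of_nonneg_left hnr hK0.le
          linarith
        have h2 : 2 * K / ((n:ℝ)+1) = 2 * K * (1 / ((n:ℝ)+1)) := by ring
        have h3 : 2 * K * (1 / ((n:ℝ)+1)) ≤ 2 * K * (Real.log (n+1) - Real.log n) := by
          apply mul_le_mul_of_nonneg_left hlog (by linarith)
        linarith
      have heq : N₂ + (k + 1) = n + 1 := by omega
      rw [heq]
      have htri : |z (n+1) + ((n+1 : ℕ) : ℝ) * g₂|
          ≤ |z n + (n : ℝ) * g₂| + |z (n+1) - z n + g₂| := by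
        have : z (n+1) + ((n+1 : ℕ) : ℝ) * g₂
            = (z n + (n : ℝ) * g₂) + (z (n+1) - z n + g₂) := by push_cast; ring
        rw [this]
        exact abs_add_le _ _
      have hcast : ((n + 1 : ℕ) : ℝ) = (n:ℝ) + 1 := by push_cast; ring
      have ihn : |z n + (n : ℝ) * g₂| ≤ A + 2 * K * Real.log n := by
        have : ((N₂ + k : ℕ) : ℝ) = (n : ℝ) := by rw [hn]
        rw [this] at ih
        have : ((N₂ : ℝ) + (k:ℝ)) = (n:ℝ) := by rw [hn]; push_cast; ring
        rw [this] at ih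
        exact ih
      calc |z (n+1) + ((n+1:ℕ):ℝ) * g₂|
          ≤ |z n + (n:ℝ) * g₂| + |z (n+1) - z n + g₂| := htri
        _ ≤ (A + 2 * K * Real.log n) + K / n := add_le_add ihn hstep
        _ ≤ A + 2 * K * Real.log ((n:ℝ)+1) := by linarith
        _ = A + 2 * K * Real.log ((N₂:ℝ) + ((k+1:ℕ):ℝ)) := by
            have hx : (n:ℝ) + 1 = (N₂:ℝ) + ((k+1:ℕ):ℝ) := by rw [hn]; push_cast; ring
            rw [hx]
  -- finite range sup
  have hne : (Finset.Icc 2 N₂).Nonempty := ⟨2, Finset.mem_Icc.2 ⟨le_rfl, hN₂2⟩⟩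
  set B : ℝ := (Finset.Icc 2 N₂).sup' hne (fun n => |z n + (n:ℝ) * g₂|) with hB
  have h2mem : (2:ℕ) ∈ Finset.Icc 2 N₂ := Finset.mem_Icc.2 ⟨le_rfl, hN₂2⟩
  have hB0 : 0 ≤ B := le_trans (abs_nonneg _)
    (Finset.le_sup' (f := fun m : ℕ => |z m + (m:ℝ) * g₂|) h2mem)
  have hlog2 : 0 < Real.log 2 := Real.log_pos (by norm_num)
  clear_value c K A B
  have hC'pos : 0 < (A + B) / Real.log 2 + 2 * K + 1 := by
    have h₁ : 0 ≤ (A + B) / Real.log 2 := div_nonneg (by linarith) hlog2.le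
    linarith
  refine ⟨(A + B) / Real.log 2 + 2 * K + 1, hC'pos, ?_⟩
  intro n hn
  have hlogn : Real.log 2 ≤ Real.log n := by
    apply Real.log_le_log (by norm_num)
    exact_mod_cast hn
  have hlogn0 : 0 < Real.log n := lt_of_lt_of_le hlog2 hlogn
  by_cases hcase : n ≤ N₂
  · have hmem : n ∈ Finset.Icc 2 N₂ := Finset.mem_Icc.2 ⟨hn, hcase⟩
    have h1 : |z n + (n:ℝ) * g₂| ≤ B := by
      rw [hB]
      exact Finset.le_sup' (f := fun m : ℕ => |z m + (m:ℝ) * g₂|) hmem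
    have h2 : B ≤ (B / Real.log 2) * Real.log n := by
      rw [div_mul_eq_mul_div, le_div_iff₀ hlog2]
      nlinarith
    have h3 : (B / Real.log 2) * Real.log n
        ≤ ((A + B) / Real.log 2 + 2 * K + 1) * Real.log n := by
      apply mul_le_mul_of_nonneg_right _ hlogn0.le
      have hd : B / Real.log 2 ≤ (A + B) / Real.log 2 := by
        gcongr
        linarith
      linarith
    linarith
  · push_neg at hcase
    obtain ⟨k, rfl⟩ : ∃ k, n = N₂ + k := ⟨n - N₂, by omega⟩
    have h1 := claim5 k
    have h2 : A ≤ (A / Real.log 2) * Real.log (N₂ + k : ℕ) := by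
      rw [div_mul_eq_mul_div, le_div_iff₀ hlog2]
      nlinarith [hlogn]
    have h3 : A / Real.log 2 ≤ (A + B) / Real.log 2 := by
      gcongr
      linarith
    have hcast : Real.log ((N₂:ℝ) + (k:ℝ)) = Real.log ((N₂ + k : ℕ) : ℝ) := by
      push_cast; ring_nf
    rw [hcast] at h1
    nlinarith [hlogn0, mul_le_mul_of_nonneg_right h3 hlogn0.le]
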